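/- For every α ∈ ℝ with α ≠ 0 and α ≠ 1, and every strictly positive vector p indexed by a nonempty finite set A, the function q ↦ d_α(p, q) is convex on the set of strictly positive vectors q indexed by A. -/

import Mathlib

open Finset

/-- The α-Renyi-variant distance
`d_α(p,q) = sgn(α)·(1/(1−α))·(1 − Σ_a p(a)^α q(a)^(1−α))`. -/
noncomputable def dRenyi {A : Type*} [Fintype A] (α : ℝ) (p q : A → ℝ) : ℝ :=
  Real.sign α * (1 / (1 - α)) * (1 - ∑ a, (p a) ^ α * (q a) ^ (1 - α))

/-- `x ↦ x ^ r` is convex on `(0, ∞)` when `r * (r - 1) ≥ 0`. -/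
lemma convexOn_rpow_Ioi {r : ℝ} (h : 0 ≤ r * (r - 1)) :
    ConvexOn ℝ (Set.Ioi (0 : ℝ)) fun x : ℝ => x ^ r := by
  have hderiv : ∀ x ∈ Set.Ioi (0 : ℝ),
      deriv (fun x : ℝ => x ^ r) x = r * x ^ (r - 1) := fun x hx =>
    (Real.hasDerivAt_rpow_const (Or.inl (ne_of_gt hx))).deriv
  refine convexOn_of_deriv2_nonneg' (convex_Ioi 0) ?_ ?_ ?_
  · intro x hx
    exact (Real.hasDerivAt_rpow_const (p := r)
      (Or.inl (ne_of_gt hx))).differentiableAt.differentiableWithinAt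
  · intro x hx
    have hd : DifferentiableAt ℝ (fun y : ℝ => r * y ^ (r - 1)) x :=
      ((Real.hasDerivAt_rpow_const (p := r - 1)
        (Or.inl (ne_of_gt hx))).differentiableAt).const_mul r
    have hev : (fun y : ℝ => r * y ^ (r - 1)) =ᶠ[nhds x] deriv (fun x : ℝ => x ^ r) := by
      filter_upwards [Ioi_mem_nhds hx] with y hy using (hderiv y hy).symm
    exact (hd.congr_of_eventuallyEq hev.symm).differentiableWithinAt
  · intro x hx
    have hev : deriv (fun x : ℝ => x ^ r) =ᶠ[nhds x] fun y : ℝ => r * y ^ (r - 1) := by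
      filter_upwards [Ioi_mem_nhds hx] with y hy using hderiv y hy
    have h2 : deriv^[2] (fun x : ℝ => x ^ r) x = r * ((r - 1) * x ^ (r - 1 - 1)) := by
      have : deriv^[2] (fun x : ℝ => x ^ r) x = deriv (deriv (fun x : ℝ => x ^ r)) x := rfl
      rw [this, hev.deriv_eq]
      rw [deriv_const_mul _
        (Real.hasDerivAt_rpow_const (p := r - 1) (Or.inl (ne_of_gt hx))).differentiableAt,
        (Real.hasDerivAt_rpow_const (p := r - 1) (Or.inl (ne_of_gt hx))).deriv]
    rw [h2, ← mul_assoc]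
    exact mul_nonneg h (Real.rpow_nonneg (le_of_lt hx) _)

/-- A finite sum of convex functions is convex. -/
lemma convexOn_finset_sum {E : Type*} [AddCommGroup E] [Module ℝ E] {s : Set E}
    (hs : Convex ℝ s) {ι : Type*} (t : Finset ι) (f : ι → E → ℝ)
    (h : ∀ i ∈ t, ConvexOn ℝ s (f i)) :
    ConvexOn ℝ s (fun x => ∑ i ∈ t, f i x) := by
  classical
  induction t using Finset.induction with
  | empty => simpa using convexOn_const 0 hs
  | insert _ _ hnot ih =>
    rename_i a t
    simp only [Finset.sum_insert hnot]
    exact (h a (Finset.mem_insert_self a t)).add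
      (ih fun i hi => h i (Finset.mem_insert_of_mem hi))

/-- For `α ∉ {0,1}` and a strictly positive vector `p`, the map `q ↦ d_α(p, q)` is
convex on the set of strictly positive vectors. -/
theorem stmt4 {A : Type*} [Fintype A] [Nonempty A]
    (α : ℝ) (hα0 : α ≠ 0) (hα1 : α ≠ 1)
    (p : A → ℝ) (hp : ∀ a, 0 < p a) :
    ConvexOn ℝ {q : A → ℝ | ∀ a, 0 < q a} (fun q => dRenyi α p q) := by
  classical
  set c : ℝ := Real.sign α * (1 / (1 - α)) with hc
  set S : Set (A → ℝ) := {q : A → ℝ | ∀ a, 0 < q a} with hS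
  have hSconv : Convex ℝ S := by
    have : S = Set.pi Set.univ (fun _ : A => Set.Ioi (0 : ℝ)) := by
      ext q; simp [S, Set.mem_pi]
    rw [this]
    exact convex_pi fun i _ => convex_Ioi 0
  -- φ : x ↦ (-c) * x^(1-α) is convex on Ioi 0
  have hφ : ConvexOn ℝ (Set.Ioi (0 : ℝ)) fun x : ℝ => -c * x ^ (1 - α) := by
    rcases lt_trichotomy α 0 with hneg | h0 | hpos
    · -- α < 0 : sign α = -1, -c = 1/(1-α) > 0, exponent 1-α > 1
      have hsign : Real.sign α = -1 := Real.sign_of_neg hneg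
      have hcval : -c = 1 / (1 - α) := by rw [hc, hsign]; ring
      have h1α : (0:ℝ) < 1 - α := by linarith
      have hpos' : (0:ℝ) < 1 / (1 - α) := by positivity
      have hconv := convexOn_rpow_Ioi (r := 1 - α)
        (by nlinarith : (0:ℝ) ≤ (1 - α) * ((1 - α) - 1))
      simpa [hcval, smul_eq_mul] using hconv.smul (le_of_lt hpos')
    · exact absurd h0 hα0
    · have hsign : Real.sign α = 1 := Real.sign_of_pos hpos
      have hcval : -c = -(1 / (1 - α)) := by rw [hc, hsign]; ring
      rcases lt_or_gt_of_ne hα1 with hlt | hgt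
      · -- 0 < α < 1 : -c < 0, exponent in (0,1): concave
        have hconc : ConcaveOn ℝ (Set.Ioi (0 : ℝ)) fun x : ℝ => x ^ (1 - α) :=
          (Real.concaveOn_rpow (by linarith) (by linarith)).subset
            (fun x hx => Set.mem_Ici.mpr (le_of_lt (Set.mem_Ioi.mp hx))) (convex_Ioi 0)
        have h1α : (0:ℝ) < 1 - α := by linarith
        have hnonneg : (0:ℝ) ≤ 1 / (1 - α) := by positivity
        have hcv := (hconc.smul hnonneg).neg
        have heq : (fun x : ℝ => -c * x ^ (1 - α)) =
            fun x : ℝ => -((1 / (1 - α)) • x ^ (1 - α)) := by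
          funext x; rw [hcval, smul_eq_mul]; ring
        rw [heq]; exact hcv
      · -- α > 1 : -c = 1/(α-1) > 0, exponent 1-α < 0 : convex
        have hα1' : (0:ℝ) < α - 1 := by linarith
        have hcval' : -c = 1 / (α - 1) := by
          rw [hcval, one_div, one_div, ← inv_neg, neg_sub]
        have hpos' : (0:ℝ) < 1 / (α - 1) := by positivity
        have hconv := convexOn_rpow_Ioi (r := 1 - α)
          (by nlinarith : (0:ℝ) ≤ (1 - α) * ((1 - α) - 1))
        simpa [hcval', smul_eq_mul] using hconv.smul (le_of_lt hpos')
  -- each term of the sum, as a function of q, is convex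
  have hterm : ∀ a : A, ConvexOn ℝ S fun q : A → ℝ => (p a) ^ α * (-c * (q a) ^ (1 - α)) := by
    intro a
    have hcomp : ConvexOn ℝ S fun q : A → ℝ => -c * (q a) ^ (1 - α) := by
      refine ⟨hSconv, fun x hx y hy s t hs ht hst => ?_⟩
      have := hφ.2 (hx a) (hy a) hs ht hst
      simpa using this
    have := hcomp.smul (le_of_lt (Real.rpow_pos_of_pos (hp a) α))
    simpa [smul_eq_mul] using this
  have hsum : ConvexOn ℝ S fun q : A → ℝ =>
      ∑ a, (p a) ^ α * (-c * (q a) ^ (1 - α)) :=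
    convexOn_finset_sum hSconv Finset.univ _ fun a _ => hterm a
  have hfinal := hsum.add (convexOn_const c hSconv)
  have heq : (fun q : A → ℝ => dRenyi α p q) =
      fun q : A → ℝ => (∑ a, (p a) ^ α * (-c * (q a) ^ (1 - α))) + c := by
    funext q
    simp only [dRenyi, ← hc, mul_sub, mul_one, Finset.mul_sum]
    rw [sub_eq_add_neg, add_comm, ← Finset.sum_neg_distrib]
    congr 1
    exact Finset.sum_congr rfl fun a _ => by ring
  rw [heq]
  exact hfinal
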